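/- Let n ≥ 1 and let S be a Sperner family on {1,…,n} with module h_S. Then h_S(t) = t for all t ∈ [0,1] if and only if S consists of exactly one set, which is a singleton (in which case H_S is a coordinate projection). -/

import Mathlib

open MeasureTheory

/-- The Sperner statistic of a family `S` of subsets of `{1,…,n}`:
`H_S(x) = max_{A ∈ S} min_{i ∈ A} x_i`. -/
noncomputable def spernerStat {n : ℕ} (S : Finset (Finset (Fin n))) (hS : S.Nonempty)
    (hne : ∀ A ∈ S, A.Nonempty) (x : Fin n → ℝ) : ℝ :=
  S.attach.sup' (Finset.attach_nonempty_iff.mpr hS)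
    (fun A => A.1.inf' (hne A.1 A.2) x)

/- The module of a Sperner family:
`h_S(t) = Σ_{ε ∈ {0,1}^n, H_S(ε)=0} t^{z(ε)} (1−t)^{n−z(ε)}`, where `z(ε)` is the
number of zero coordinates of `ε`. -/
open scoped Classical in
noncomputable def spernerModule {n : ℕ} (S : Finset (Finset (Fin n))) (hS : S.Nonempty)
    (hne : ∀ A ∈ S, A.Nonempty) (t : ℝ) : ℝ :=
  ∑ ε : Fin n → Bool,
    if spernerStat S hS hne (fun i => if ε i then 1 else 0) = 0 then
      t ^ (Finset.univ.filter fun i => ε i = false).card *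
        (1 - t) ^ (n - (Finset.univ.filter fun i => ε i = false).card)
    else 0

/-- key weighted-sum lemma -/
lemma wgt_sum {n : ℕ} (t : ℝ) (P Q : Finset (Fin n)) (hPQ : Disjoint P Q) :
    ∑ T ∈ Finset.univ.filter (fun T : Finset (Fin n) => P ⊆ T ∧ Disjoint T Q),
      t ^ T.card * (1 - t) ^ (n - T.card) = t ^ P.card * (1 - t) ^ Q.card := by
  classical
  set R : Finset (Fin n) := (P ∪ Q)ᶜ with hR
  have hcard : P.card + Q.card + R.card = n := by
    have h1 : (P ∪ Q).card = P.card + Q.card := Finset.card_union_of_disjoint hPQ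
    have h2 : R.card = n - (P ∪ Q).card := by
      rw [hR, Finset.card_compl, Fintype.card_fin]
    have h3 : (P ∪ Q).card ≤ n := by
      simpa using Finset.card_le_univ (P ∪ Q)
    omega
  have key : ∑ T ∈ Finset.univ.filter (fun T : Finset (Fin n) => P ⊆ T ∧ Disjoint T Q),
      t ^ T.card * (1 - t) ^ (n - T.card)
      = ∑ T' ∈ R.powerset, t ^ (P.card + T'.card) *
          (1 - t) ^ (Q.card + (R.card - T'.card)) := by
    apply Finset.sum_nbij' (fun T => T \ P) (fun T' => P ∪ T')
    · intro T hT
      simp only [Finset.mem_filter, Finset.mem_univ, true_and] at hT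
      rw [Finset.mem_powerset]
      intro x hx
      simp only [Finset.mem_sdiff] at hx
      simp only [hR, Finset.mem_compl, Finset.mem_union]
      push_neg
      exact ⟨hx.2, fun hq => (Finset.disjoint_left.mp hT.2) hx.1 hq⟩
    · intro T' hT'
      rw [Finset.mem_powerset] at hT'
      simp only [Finset.mem_filter, Finset.mem_univ, true_and]
      refine ⟨Finset.subset_union_left, ?_⟩
      rw [Finset.disjoint_union_left]
      refine ⟨hPQ, ?_⟩
      rw [Finset.disjoint_left]
      intro x hxT' hxQ
      have := hT' hxT'
      simp only [hR, Finset.mem_compl, Finset.mem_union] at this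
      exact this (Or.inr hxQ)
    · intro T hT
      simp only [Finset.mem_filter, Finset.mem_univ, true_and] at hT
      exact Finset.union_sdiff_of_subset hT.1
    · intro T' hT'
      rw [Finset.mem_powerset] at hT'
      apply Finset.union_sdiff_cancel_left
      rw [Finset.disjoint_left]
      intro x hxP hxT'
      have := hT' hxT'
      simp only [hR, Finset.mem_compl, Finset.mem_union] at this
      exact this (Or.inl hxP)
    · intro T hT
      simp only [Finset.mem_filter, Finset.mem_univ, true_and] at hT
      have hPT : Disjoint P (T \ P) := Finset.disjoint_sdiff
      have hc : T.card = P.card + (T \ P).card := by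
        rw [← Finset.card_union_of_disjoint hPT, Finset.union_sdiff_of_subset hT.1]
      have hle : (T \ P).card ≤ R.card := by
        apply Finset.card_le_card
        intro x hx
        simp only [Finset.mem_sdiff] at hx
        simp only [hR, Finset.mem_compl, Finset.mem_union]
        push_neg
        exact ⟨hx.2, fun hq => (Finset.disjoint_left.mp hT.2) hx.1 hq⟩
      have hTn : T.card ≤ n := by simpa using Finset.card_le_univ T
      rw [hc]
      have : n - (P.card + (T \ P).card) = Q.card + (R.card - (T \ P).card) := by omega
      rw [this]
  rw [key]
  have expand : ∀ T' ∈ R.powerset, t ^ (P.card + T'.card) *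
      (1 - t) ^ (Q.card + (R.card - T'.card))
      = (t ^ P.card * (1 - t) ^ Q.card) * (t ^ T'.card * (1 - t) ^ (R \ T').card) := by
    intro T' hT'
    rw [Finset.mem_powerset] at hT'
    rw [Finset.card_sdiff_of_subset hT', pow_add, pow_add]
    ring
  rw [Finset.sum_congr rfl expand, ← Finset.mul_sum]
  have hone : ∑ T' ∈ R.powerset, t ^ T'.card * (1 - t) ^ (R \ T').card = 1 := by
    have h := Finset.prod_add (fun _ : Fin n => t) (fun _ : Fin n => (1 - t)) R
    simp only [Finset.prod_const] at h
    have : (t + (1 - t)) ^ R.card = 1 := by norm_num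
    rw [this] at h
    exact h.symm
  rw [hone, mul_one]

lemma stat_eq_zero_iff {n : ℕ} (S : Finset (Finset (Fin n))) (hS : S.Nonempty)
    (hne : ∀ A ∈ S, A.Nonempty) (ε : Fin n → Bool) :
    spernerStat S hS hne (fun i => if ε i then 1 else 0) = 0 ↔
      ∀ A ∈ S, ∃ i ∈ A, ε i = false := by
  have hnn : 0 ≤ spernerStat S hS hne (fun i => if ε i then 1 else 0) := by
    obtain ⟨A, hA⟩ := hS
    refine le_trans ?_ (Finset.le_sup' _ (Finset.mem_attach _ ⟨A, hA⟩))
    apply Finset.le_inf'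
    intro i _
    split <;> norm_num
  constructor
  · intro h A hA
    have hle : spernerStat S hS hne (fun i => if ε i then 1 else 0) ≤ 0 := le_of_eq h
    rw [spernerStat, Finset.sup'_le_iff] at hle
    have := hle ⟨A, hA⟩ (Finset.mem_attach _ _)
    rw [Finset.inf'_le_iff] at this
    obtain ⟨i, hi, hival⟩ := this
    refine ⟨i, hi, ?_⟩
    by_contra hb
    simp only [Bool.not_eq_false] at hb
    rw [if_pos hb] at hival
    linarith
  · intro h
    apply le_antisymm _ hnn
    rw [spernerStat, Finset.sup'_le_iff]
    rintro ⟨A, hA⟩ -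
    rw [Finset.inf'_le_iff]
    obtain ⟨i, hi, hival⟩ := h A hA
    exact ⟨i, hi, by rw [hival]; simp⟩

open scoped Classical in
lemma module_eq {n : ℕ} (S : Finset (Finset (Fin n))) (hS : S.Nonempty)
    (hne : ∀ A ∈ S, A.Nonempty) (t : ℝ) :
    spernerModule S hS hne t =
      ∑ T ∈ Finset.univ.filter (fun T : Finset (Fin n) => ∀ A ∈ S, ¬ Disjoint A T),
        t ^ T.card * (1 - t) ^ (n - T.card) := by
  classical
  rw [spernerModule, Finset.sum_filter]
  apply Fintype.sum_equiv
    (⟨fun ε : Fin n → Bool => Finset.univ.filter fun i => ε i = false,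
      fun T => fun i => decide (i ∉ T),
      fun ε => by funext i; by_cases h : ε i <;> simp [h],
      fun T => by ext i; simp⟩ : (Fin n → Bool) ≃ Finset (Fin n))
  intro ε
  simp only [Equiv.coe_fn_mk]
  have hiff : (spernerStat S hS hne (fun i => if ε i then 1 else 0) = 0) ↔
      ∀ A ∈ S, ¬ Disjoint A (Finset.univ.filter fun i => ε i = false) := by
    rw [stat_eq_zero_iff]
    apply forall₂_congr
    intro A hA
    rw [Finset.not_disjoint_iff]
    constructor
    · rintro ⟨i, hi, hb⟩; exact ⟨i, hi, by simp [hb]⟩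
    · rintro ⟨i, hi, hb⟩; simp only [Finset.mem_filter] at hb; exact ⟨i, hi, hb.2⟩
  exact if_congr hiff rfl rfl

/-- The module of a Sperner family is the identity on `[0,1]` if and only if the family
consists of exactly one singleton (in which case `H_S` is a coordinate projection). -/
theorem sperner_module_identity_iff_projection
    (n : ℕ) (hn : 1 ≤ n) (S : Finset (Finset (Fin n))) (hS : S.Nonempty)
    (hne : ∀ A ∈ S, A.Nonempty) (hsp : ∀ A ∈ S, ∀ B ∈ S, A ⊆ B → A = B) :
    (∀ t ∈ Set.Icc (0 : ℝ) 1, spernerModule S hS hne t = t) ↔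
      ∃ i : Fin n, S = {({i} : Finset (Fin n))} := by
  classical
  constructor
  · intro ht
    -- the complementary sum equals 1 - t
    have hw : ∀ t : ℝ, t ∈ Set.Icc (0:ℝ) 1 →
        ∑ T ∈ Finset.univ.filter (fun T : Finset (Fin n) => ¬ (∀ A ∈ S, ¬ Disjoint A T)),
          t ^ T.card * (1 - t) ^ (n - T.card) = 1 - t := by
      intro t htI
      have h1' : ∑ T : Finset (Fin n), t ^ T.card * (1 - t) ^ (n - T.card) = 1 := by
        calc ∑ T : Finset (Fin n), t ^ T.card * (1 - t) ^ (n - T.card)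
            = ∑ T ∈ Finset.univ.filter (fun T : Finset (Fin n) =>
                (∅ : Finset (Fin n)) ⊆ T ∧ Disjoint T (∅ : Finset (Fin n))),
                t ^ T.card * (1 - t) ^ (n - T.card) := by
              rw [Finset.filter_true_of_mem]
              intro T _
              simp
          _ = 1 := by simpa using wgt_sum t (∅ : Finset (Fin n)) ∅ (by simp)
      have h2 := module_eq S hS hne t
      rw [ht t htI] at h2
      have h3 := Finset.sum_filter_add_sum_filter_not Finset.univ
        (fun T : Finset (Fin n) => ∀ A ∈ S, ¬ Disjoint A T)
        (fun T => t ^ T.card * (1 - t) ^ (n - T.card))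
      rw [h1'] at h3
      linarith
    have hwnn : ∀ t : ℝ, t ∈ Set.Icc (0:ℝ) 1 → ∀ T : Finset (Fin n),
        0 ≤ t ^ T.card * (1-t) ^ (n - T.card) := by
      rintro t ⟨h0, h1⟩ T
      exact mul_nonneg (pow_nonneg h0 _) (pow_nonneg (by linarith) _)
    -- Step 1: S contains a singleton
    obtain ⟨i, hiS⟩ : ∃ i : Fin n, ({i} : Finset (Fin n)) ∈ S := by
      by_contra hno
      push_neg at hno
      have hcard2 : ∀ A ∈ S, 2 ≤ A.card := by
        intro A hA
        have h1 : 1 ≤ A.card := Finset.card_pos.mpr (hne A hA)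
        rcases Nat.lt_or_ge A.card 2 with h|h
        · have hA1 : A.card = 1 := by omega
          obtain ⟨j, rfl⟩ := Finset.card_eq_one.mp hA1
          exact absurd hA (hno j)
        · exact h
      have hm : 1 ≤ S.card := Finset.card_pos.mpr hS
      have hm' : (1:ℝ) ≤ (S.card : ℝ) := by exact_mod_cast hm
      have hmpos : (0:ℝ) < (S.card : ℝ) := by linarith
      set δ : ℝ := 1 / (2 * S.card) with hδ
      have hδpos : 0 < δ := by positivity
      have hδle : δ ≤ 1/2 := by
        rw [hδ, div_le_div_iff₀ (by positivity) (by norm_num)]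
        nlinarith
      set t : ℝ := 1 - δ with htdef
      have htI : t ∈ Set.Icc (0:ℝ) 1 := Set.mem_Icc.mpr ⟨by linarith, by linarith⟩
      have heq := hw t htI
      have h1t : 1 - t = δ := by rw [htdef]; ring
      -- pointwise union bound
      have hptw : ∀ T : Finset (Fin n),
          (if ¬ (∀ A ∈ S, ¬ Disjoint A T) then t ^ T.card * (1-t) ^ (n - T.card) else 0)
          ≤ ∑ A ∈ S, (if Disjoint A T then t ^ T.card * (1-t) ^ (n - T.card) else 0) := by
        intro T
        by_cases hC : ∀ A ∈ S, ¬ Disjoint A T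
        · rw [if_neg (not_not_intro hC)]
          apply Finset.sum_nonneg
          intro A _
          split
          · exact hwnn t htI T
          · exact le_rfl
        · rw [if_pos hC]
          push_neg at hC
          obtain ⟨A, hA, hdisj⟩ := hC
          refine le_trans (le_of_eq (if_pos hdisj).symm)
            (Finset.single_le_sum
              (f := fun B => if Disjoint B T then t ^ T.card * (1-t) ^ (n - T.card) else 0)
              (fun B _ => ?_) hA)
          split
          · exact hwnn t htI T
          · exact le_rfl
      have hub : ∑ T ∈ Finset.univ.filter (fun T : Finset (Fin n) => ¬ (∀ A ∈ S, ¬ Disjoint A T)),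
          t ^ T.card * (1 - t) ^ (n - T.card) ≤ ∑ A ∈ S, (1 - t) ^ A.card := by
        rw [Finset.sum_filter]
        calc ∑ T : Finset (Fin n),
              (if ¬ (∀ A ∈ S, ¬ Disjoint A T) then t ^ T.card * (1-t) ^ (n - T.card) else 0)
            ≤ ∑ T : Finset (Fin n), ∑ A ∈ S,
              (if Disjoint A T then t ^ T.card * (1-t) ^ (n - T.card) else 0) :=
              Finset.sum_le_sum (fun T _ => hptw T)
          _ = ∑ A ∈ S, ∑ T : Finset (Fin n),
              (if Disjoint A T then t ^ T.card * (1-t) ^ (n - T.card) else 0) := Finset.sum_comm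
          _ = ∑ A ∈ S, (1 - t) ^ A.card := by
              apply Finset.sum_congr rfl
              intro A hA
              rw [← Finset.sum_filter]
              have hfc : Finset.univ.filter (fun T : Finset (Fin n) => Disjoint A T)
                  = Finset.univ.filter (fun T : Finset (Fin n) =>
                      (∅ : Finset (Fin n)) ⊆ T ∧ Disjoint T A) := by
                apply Finset.filter_congr
                intro T _
                simp [disjoint_comm]
              rw [hfc]
              simpa using wgt_sum t (∅ : Finset (Fin n)) A (by simp)
      have hfinal : ∑ A ∈ S, δ ^ A.card ≤ (S.card : ℝ) * δ ^ 2 := by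
        calc ∑ A ∈ S, δ ^ A.card ≤ ∑ A ∈ S, δ ^ 2 := by
              apply Finset.sum_le_sum
              intro A hA
              exact pow_le_pow_of_le_one (le_of_lt hδpos) (by linarith) (hcard2 A hA)
          _ = (S.card : ℝ) * δ ^ 2 := by rw [Finset.sum_const, nsmul_eq_mul]
      have hcontra : (S.card : ℝ) * δ ^ 2 = δ / 2 := by
        rw [hδ]
        field_simp
      rw [heq, h1t] at hub
      rw [hcontra] at hfinal
      linarith
    -- Step 2: S = {{i}}
    refine ⟨i, Finset.eq_singleton_iff_unique_mem.mpr ⟨hiS, ?_⟩⟩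
    intro B hB
    by_contra hBne
    have hiB : i ∉ B := fun hiB =>
      hBne ((hsp {i} hiS B hB (Finset.singleton_subset_iff.mpr hiB)).symm)
    have htI : (1/2 : ℝ) ∈ Set.Icc (0:ℝ) 1 := Set.mem_Icc.mpr ⟨by norm_num, by norm_num⟩
    have heq := hw (1/2) htI
    have s1 := wgt_sum (1/2 : ℝ) (∅ : Finset (Fin n)) {i} (by simp)
    have s2 := wgt_sum (1/2 : ℝ) ({i} : Finset (Fin n)) B (Finset.disjoint_singleton_left.mpr hiB)
    have hptw2 : ∀ T : Finset (Fin n),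
        (if (∅ : Finset (Fin n)) ⊆ T ∧ Disjoint T ({i} : Finset (Fin n)) then
          (1/2:ℝ) ^ T.card * (1 - 1/2) ^ (n - T.card) else 0)
        + (if ({i} : Finset (Fin n)) ⊆ T ∧ Disjoint T B then
          (1/2:ℝ) ^ T.card * (1 - 1/2) ^ (n - T.card) else 0)
        ≤ (if ¬ (∀ A ∈ S, ¬ Disjoint A T) then
          (1/2:ℝ) ^ T.card * (1 - 1/2) ^ (n - T.card) else 0) := by
      intro T
      have hwTnn : (0:ℝ) ≤ (1/2:ℝ) ^ T.card * (1 - 1/2) ^ (n - T.card) := hwnn (1/2) htI T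
      by_cases h1 : Disjoint T ({i} : Finset (Fin n))
      · have h2 : ¬ (({i} : Finset (Fin n)) ⊆ T ∧ Disjoint T B) := by
          rintro ⟨hsub, -⟩
          exact (Finset.disjoint_left.mp h1) (hsub (Finset.mem_singleton_self i))
            (Finset.mem_singleton_self i)
        have hnC : ¬ (∀ A ∈ S, ¬ Disjoint A T) := fun hC => hC {i} hiS h1.symm
        rw [if_pos ⟨Finset.empty_subset T, h1⟩, if_neg h2, if_pos hnC]
        linarith
      · have h1' : ¬ ((∅ : Finset (Fin n)) ⊆ T ∧ Disjoint T ({i} : Finset (Fin n))) :=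
          fun h => h1 h.2
        rw [if_neg h1', zero_add]
        by_cases h2 : ({i} : Finset (Fin n)) ⊆ T ∧ Disjoint T B
        · have hnC : ¬ (∀ A ∈ S, ¬ Disjoint A T) := fun hC => hC B hB h2.2.symm
          rw [if_pos h2, if_pos hnC]
        · rw [if_neg h2]
          split
          · exact hwTnn
          · exact le_rfl
    have hsum : (1/2:ℝ) ^ (∅ : Finset (Fin n)).card * (1 - 1/2) ^ ({i} : Finset (Fin n)).card
        + (1/2:ℝ) ^ ({i} : Finset (Fin n)).card * (1 - 1/2) ^ B.card ≤ 1 - 1/2 := by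
      calc (1/2:ℝ) ^ (∅ : Finset (Fin n)).card * (1 - 1/2) ^ ({i} : Finset (Fin n)).card
          + (1/2:ℝ) ^ ({i} : Finset (Fin n)).card * (1 - 1/2) ^ B.card
          = (∑ T ∈ Finset.univ.filter (fun T : Finset (Fin n) =>
              (∅ : Finset (Fin n)) ⊆ T ∧ Disjoint T ({i} : Finset (Fin n))),
              (1/2:ℝ) ^ T.card * (1 - 1/2) ^ (n - T.card))
            + ∑ T ∈ Finset.univ.filter (fun T : Finset (Fin n) =>
              ({i} : Finset (Fin n)) ⊆ T ∧ Disjoint T B),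
              (1/2:ℝ) ^ T.card * (1 - 1/2) ^ (n - T.card) := by rw [s1, s2]
        _ ≤ ∑ T ∈ Finset.univ.filter (fun T : Finset (Fin n) => ¬ (∀ A ∈ S, ¬ Disjoint A T)),
              (1/2:ℝ) ^ T.card * (1 - 1/2) ^ (n - T.card) := by
            rw [Finset.sum_filter, Finset.sum_filter, Finset.sum_filter,
              ← Finset.sum_add_distrib]
            exact Finset.sum_le_sum (fun T _ => hptw2 T)
        _ = 1 - 1/2 := heq
    have e1 : (1/2:ℝ) ^ (∅ : Finset (Fin n)).card * (1 - 1/2) ^ ({i} : Finset (Fin n)).card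
        = 1/2 := by norm_num
    have e2 : (0:ℝ) < (1/2:ℝ) ^ ({i} : Finset (Fin n)).card * (1 - 1/2) ^ B.card := by
      apply mul_pos <;> apply pow_pos <;> norm_num
    linarith
  · rintro ⟨i, rfl⟩ t _
    rw [module_eq]
    have hfc : (Finset.univ.filter (fun T : Finset (Fin n) =>
        ∀ A ∈ ({({i} : Finset (Fin n))} : Finset (Finset (Fin n))), ¬ Disjoint A T))
        = Finset.univ.filter (fun T : Finset (Fin n) =>
          ({i} : Finset (Fin n)) ⊆ T ∧ Disjoint T (∅ : Finset (Fin n))) := by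
      apply Finset.filter_congr
      intro T _
      simp [Finset.disjoint_singleton_left, Finset.singleton_subset_iff]
    rw [hfc, wgt_sum t {i} ∅ (by simp)]
    simp
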